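/- Let ν be a finite Borel measure on ℝ with compact support not containing 0, φ Schwartz with φ(y)=1/y on supp(ν), and g(x) = (1+x)^{−1/2} + sup{|ν̂(tx)|:|t|≥1}. For a ≥ 1, b ≥ 0, N ≥ 1 and ξ ∈ ℝ, define J = ∫_ℝ ∫_0^1 e^{−2πi(ξ/N)(aN + bN + x)y} dx dν(y). Then there is a constant C₀ (depending only on ν and φ) with |J| ≤ C₀ g(|ξ|/2) min{1, N/|ξ|}. -/

import Mathlib

open MeasureTheory

/-- Fourier transform of a measure on `ℝ`. -/
noncomputable def ft1 (μ : Measure ℝ) (ξ : ℝ) : ℂ :=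
  ∫ x, Complex.exp (((-2 * Real.pi * x * ξ : ℝ) : ℂ) * Complex.I) ∂μ

/-- The auxiliary majorant `g(x) = (1+x)^{-1/2} + sup{|ν̂(tx)| : |t| ≥ 1}`. -/
noncomputable def gfun (ν : Measure ℝ) (x : ℝ) : ℝ :=
  (1 + x) ^ (-(1 / 2 : ℝ)) + sSup {r : ℝ | ∃ t : ℝ, 1 ≤ |t| ∧ r = ‖ft1 ν (t * x)‖}

namespace Stmt17Aux

set_option linter.unusedSectionVars false

open Real FourierTransform

variable (ν : Measure ℝ) [IsFiniteMeasure ν]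

lemma norm_cexpI (r : ℝ) : ‖Complex.exp ((r:ℂ) * Complex.I)‖ = 1 := by
  rw [Complex.norm_exp_ofReal_mul_I]

lemma ft1_eq (s : ℝ) : ft1 ν s = ∫ y, Complex.exp (((-2*π*s*y : ℝ):ℂ) * Complex.I) ∂ν := by
  rw [ft1]; congr 1; funext y; congr 2; push_cast; ring

lemma ft1_norm_le (s : ℝ) : ‖ft1 ν s‖ ≤ (ν Set.univ).toReal := by
  rw [ft1]
  calc ‖∫ x, Complex.exp (((-2 * Real.pi * x * s : ℝ) : ℂ) * Complex.I) ∂ν‖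
      ≤ 1 * (ν Set.univ).toReal := by
        apply norm_integral_le_of_norm_le_const
        filter_upwards with x
        rw [norm_cexpI]
    _ = _ := one_mul _

lemma ft1_continuous : Continuous (ft1 ν) := by
  unfold ft1
  apply continuous_of_dominated (bound := fun _ => (1:ℝ))
  · intro s
    apply Continuous.aestronglyMeasurable
    fun_prop
  · intro s
    filter_upwards with x
    rw [norm_cexpI]
  · exact integrable_const 1
  · filter_upwards with x
    fun_prop

lemma bddAbove_S (x : ℝ) :
    BddAbove {r : ℝ | ∃ t : ℝ, 1 ≤ |t| ∧ r = ‖ft1 ν (t * x)‖} := by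
  refine ⟨(ν Set.univ).toReal, ?_⟩
  rintro r ⟨t, -, rfl⟩
  exact ft1_norm_le ν _

lemma S_nonneg (x : ℝ) : 0 ≤ sSup {r : ℝ | ∃ t : ℝ, 1 ≤ |t| ∧ r = ‖ft1 ν (t * x)‖} := by
  refine le_trans (norm_nonneg (ft1 ν (1 * x))) (le_csSup (bddAbove_S ν x) ?_)
  exact ⟨1, by norm_num⟩

lemma ft1_le_S {x : ℝ} (hx : 0 < x) {r : ℝ} (hr : x ≤ |r|) :
    ‖ft1 ν r‖ ≤ sSup {r : ℝ | ∃ t : ℝ, 1 ≤ |t| ∧ r = ‖ft1 ν (t * x)‖} := by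
  apply le_csSup (bddAbove_S ν x)
  refine ⟨r / x, ?_, by rw [div_mul_cancel₀ _ hx.ne']⟩
  rw [abs_div, abs_of_pos hx, le_div_iff₀ hx, one_mul]
  exact hr

lemma pow_term_nonneg {x : ℝ} (hx : 0 ≤ x) : (0:ℝ) ≤ (1 + x) ^ (-(1 / 2 : ℝ)) := by
  have : (0:ℝ) < 1 + x := by linarith
  positivity

lemma S_le_gfun {x : ℝ} (hx : 0 ≤ x) :
    sSup {r : ℝ | ∃ t : ℝ, 1 ≤ |t| ∧ r = ‖ft1 ν (t * x)‖} ≤ gfun ν x := by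
  rw [gfun]; linarith [pow_term_nonneg hx]

lemma pow_le_gfun (x : ℝ) : (1 + x) ^ (-(1 / 2 : ℝ)) ≤ gfun ν x := by
  rw [gfun]; linarith [S_nonneg ν x]

lemma gfun_nonneg {x : ℝ} (hx : 0 ≤ x) : 0 ≤ gfun ν x := by
  rw [gfun]; linarith [S_nonneg ν x, pow_term_nonneg hx]

lemma one_le_gfun_zero : 1 ≤ gfun ν 0 := by
  rw [gfun]
  have : (1 + (0:ℝ)) ^ (-(1 / 2 : ℝ)) = 1 := by norm_num
  rw [this]
  linarith [S_nonneg ν 0]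

lemma ioc_finite : IsFiniteMeasure (volume.restrict (Set.Ioc (0:ℝ) 1)) := by
  constructor
  rw [Measure.restrict_apply MeasurableSet.univ, Set.univ_inter, Real.volume_Ioc]
  exact ENNReal.ofReal_lt_top

lemma J_eq (a b N ξ : ℝ) :
    (∫ y, (∫ x in (0:ℝ)..1,
      Complex.exp (((-2 * π * (ξ / N) * (a * N + b * N + x) * y : ℝ) : ℂ) * Complex.I)) ∂ν)
    = ∫ x in Set.Ioc (0:ℝ) 1, ft1 ν ((ξ/N) * (a*N+b*N+x)) := by
  haveI := ioc_finite
  have hswap := MeasureTheory.integral_integral_swap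
    (f := fun (y x : ℝ) =>
      Complex.exp (((-2 * π * (ξ / N) * (a * N + b * N + x) * y : ℝ) : ℂ) * Complex.I))
    (μ := ν) (ν := volume.restrict (Set.Ioc (0:ℝ) 1)) ?_
  · calc (∫ y, (∫ x in (0:ℝ)..1,
        Complex.exp (((-2 * π * (ξ / N) * (a * N + b * N + x) * y : ℝ) : ℂ) * Complex.I)) ∂ν)
        = ∫ y, (∫ x in Set.Ioc (0:ℝ) 1,
            Complex.exp (((-2 * π * (ξ / N) * (a * N + b * N + x) * y : ℝ) : ℂ) * Complex.I)) ∂ν := by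
          congr 1; funext y; rw [intervalIntegral.integral_of_le zero_le_one]
      _ = ∫ x in Set.Ioc (0:ℝ) 1, (∫ y,
            Complex.exp (((-2 * π * (ξ / N) * (a * N + b * N + x) * y : ℝ) : ℂ) * Complex.I) ∂ν) := hswap
      _ = ∫ x in Set.Ioc (0:ℝ) 1, ft1 ν ((ξ/N) * (a*N+b*N+x)) := by
          refine setIntegral_congr_fun measurableSet_Ioc (fun x _ => ?_)
          rw [ft1_eq]; congr 1; funext y; congr 2; push_cast; ring
  · constructor
    · apply Continuous.aestronglyMeasurable
      fun_prop
    · apply HasFiniteIntegral.mono' (g := fun _ => (1:ℝ)) (integrable_const (1:ℝ)).2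
      filter_upwards with p
      exact le_of_eq (norm_cexpI _)

lemma arg_large {a b N ξ x : ℝ} (ha : 1 ≤ a) (hb : 0 ≤ b) (hN : 1 ≤ N) (hx : 0 ≤ x) :
    |ξ| ≤ |(ξ/N) * (a*N+b*N+x)| := by
  have hN0 : (0:ℝ) < N := by linarith
  have hu : N ≤ a*N+b*N+x := by nlinarith
  rw [abs_mul, abs_div, abs_of_pos hN0, abs_of_pos (by linarith : (0:ℝ) < a*N+b*N+x)]
  rw [div_mul_eq_mul_div, le_div_iff₀ hN0]
  nlinarith [abs_nonneg ξ]

lemma J_norm_le_M (a b N ξ : ℝ) :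
    ‖∫ y, (∫ x in (0:ℝ)..1,
      Complex.exp (((-2 * π * (ξ / N) * (a * N + b * N + x) * y : ℝ) : ℂ) * Complex.I)) ∂ν‖
    ≤ (ν Set.univ).toReal := by
  calc ‖∫ y, (∫ x in (0:ℝ)..1,
      Complex.exp (((-2 * π * (ξ / N) * (a * N + b * N + x) * y : ℝ) : ℂ) * Complex.I)) ∂ν‖
      ≤ 1 * (ν Set.univ).toReal := by
        apply norm_integral_le_of_norm_le_const
        filter_upwards with y
        have := intervalIntegral.norm_integral_le_of_norm_le_const
          (C := 1) (a := (0:ℝ)) (b := 1)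
          (f := fun x => Complex.exp (((-2 * π * (ξ / N) * (a * N + b * N + x) * y : ℝ) : ℂ) * Complex.I))
          (fun x _ => le_of_eq (norm_cexpI _))
        simpa using this
    _ = _ := one_mul _

lemma exists_C₂ (ψ : SchwartzMap ℝ ℂ) :
    ∃ C₂ : ℝ, 0 ≤ C₂ ∧ ∀ u : ℝ, (1+|u|) ^ (2:ℝ) * ‖ψ u‖ ≤ C₂ := by
  refine ⟨2 ^ 2 * (Finset.Iic ((2:ℕ),(0:ℕ))).sup (fun m => SchwartzMap.seminorm ℝ m.1 m.2) ψ,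
    by positivity, fun u => ?_⟩
  have h := SchwartzMap.one_add_le_sup_seminorm_apply (𝕜 := ℝ) (m := ((2:ℕ),(0:ℕ)))
    (k := 2) (n := 0) le_rfl le_rfl ψ u
  rw [norm_iteratedFDeriv_zero] at h
  have h2 : (1+|u|) ^ (2:ℝ) = (1+‖u‖) ^ (2:ℕ) := by
    rw [Real.norm_eq_abs]
    norm_num [Real.rpow_natCast]
  rw [h2]
  exact h

lemma inner_integral_eq {d y : ℝ} (hd : d ≠ 0) (hy : y ≠ 0) (A : ℝ) :
    (∫ x in (0:ℝ)..1, Complex.exp (((-2 * π * d * (A + x) * y : ℝ) : ℂ) * Complex.I))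
    = (Complex.exp (((-2*π*(d*(A+1))*y : ℝ):ℂ) * Complex.I)
       - Complex.exp (((-2*π*(d*A)*y : ℝ):ℂ) * Complex.I)) / (((-2*π*d*y : ℝ):ℂ) * Complex.I) := by
  set c : ℂ := ((-2*π*d*y : ℝ):ℂ) * Complex.I with hc
  have hr0 : (-2*π*d*y : ℝ) ≠ 0 := by
    simp only [mul_ne_zero_iff]
    exact ⟨⟨⟨by norm_num, Real.pi_ne_zero⟩, hd⟩, hy⟩
  have hc0 : c ≠ 0 := by
    rw [hc]
    exact mul_ne_zero (Complex.ofReal_ne_zero.mpr hr0) Complex.I_ne_zero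
  have h1 : ∀ x : ℝ, (((-2 * π * d * (A + x) * y : ℝ) : ℂ) * Complex.I) = c * (A:ℝ) + c * (x:ℝ) := by
    intro x; rw [hc]; push_cast; ring
  calc (∫ x in (0:ℝ)..1, Complex.exp (((-2 * π * d * (A + x) * y : ℝ) : ℂ) * Complex.I))
      = ∫ x in (0:ℝ)..1, Complex.exp (c * (A:ℝ)) * Complex.exp (c * (x:ℝ)) := by
        apply intervalIntegral.integral_congr
        intro x _
        show Complex.exp _ = Complex.exp (c * (A:ℝ)) * Complex.exp (c * (x:ℝ))
        rw [h1, Complex.exp_add]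
    _ = Complex.exp (c * (A:ℝ)) * ((Complex.exp (c * (1:ℝ)) - Complex.exp (c * (0:ℝ)))/c) := by
        rw [intervalIntegral.integral_const_mul, integral_exp_mul_complex hc0]
    _ = (Complex.exp (c * (A:ℝ) + c * (1:ℝ)) - Complex.exp (c * (A:ℝ) + c * (0:ℝ))) / c := by
        rw [Complex.exp_add, Complex.exp_add]; ring
    _ = _ := by
        rw [hc]
        congr 2 <;> push_cast <;> ring

lemma integrable_phi_exp (φ : SchwartzMap ℝ ℂ) (s : ℝ) :
    Integrable (fun y => φ y * Complex.exp (((-2*π*s*y : ℝ):ℂ) * Complex.I)) ν := by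
  refine ⟨Continuous.aestronglyMeasurable (by fun_prop), ?_⟩
  apply HasFiniteIntegral.mono' (g := fun _ => ‖φ.toBoundedContinuousFunction‖)
    (integrable_const _).2
  filter_upwards with y
  rw [norm_mul]
  calc ‖φ y‖ * ‖Complex.exp (((-2*π*s*y : ℝ):ℂ) * Complex.I)‖
      ≤ ‖φ.toBoundedContinuousFunction‖ * 1 := by
        apply mul_le_mul _ _ (norm_nonneg _) (norm_nonneg _)
        · exact φ.toBoundedContinuousFunction.norm_coe_le_norm y
        · rw [Complex.norm_exp_ofReal_mul_I]
    _ = _ := mul_one _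

lemma F_eq (φ : SchwartzMap ℝ ℂ) (s : ℝ) :
    (∫ y, φ y * Complex.exp (((-2*π*s*y : ℝ):ℂ) * Complex.I) ∂ν)
    = ∫ u, (SchwartzMap.fourierTransformCLM ℂ φ) u * ft1 ν (s - u) := by
  set ψ := SchwartzMap.fourierTransformCLM ℂ φ with hψdef
  have hψft : 𝓕 ⇑φ = ⇑ψ := by rw [hψdef, SchwartzMap.fourierTransformCLM_apply, SchwartzMap.fourier_coe]
  have hinv : ∀ y : ℝ, φ y = ∫ u : ℝ, Complex.exp ((↑(2*π*(u*y)) * Complex.I)) * ψ u := by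
    intro y
    have h := Continuous.fourierInv_fourier_eq φ.continuous φ.integrable
      (by rw [hψft]; exact ψ.integrable)
    conv_lhs => rw [← h]
    rw [Real.fourierInv_eq']
    simp only [RCLike.inner_apply, starRingEnd_apply, star_trivial, smul_eq_mul, hψft, mul_comm y]
  have hswap : (∫ y, (∫ u : ℝ, Complex.exp ((↑(2*π*(u*y)) * Complex.I)) * ψ u
        * Complex.exp (((-2*π*s*y : ℝ):ℂ) * Complex.I)) ∂ν)
      = ∫ u : ℝ, (∫ y, Complex.exp ((↑(2*π*(u*y)) * Complex.I)) * ψ u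
        * Complex.exp (((-2*π*s*y : ℝ):ℂ) * Complex.I) ∂ν) := by
    apply MeasureTheory.integral_integral_swap
    have hmeas : AEStronglyMeasurable (Function.uncurry fun (y u : ℝ) =>
        Complex.exp ((↑(2*π*(u*y)) * Complex.I)) * ψ u
        * Complex.exp (((-2*π*s*y : ℝ):ℂ) * Complex.I)) (ν.prod volume) :=
      Continuous.aestronglyMeasurable (by fun_prop)
    have hg : Integrable (fun p : ℝ × ℝ => ‖ψ p.2‖) (ν.prod volume) := by
      rw [integrable_prod_iff (Continuous.aestronglyMeasurable (by fun_prop))]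
      refine ⟨Filter.Eventually.of_forall (fun y => ψ.integrable.norm), ?_⟩
      simp only [norm_norm]
      exact integrable_const _
    refine hg.mono' hmeas (Filter.Eventually.of_forall (fun p => ?_))
    show ‖Complex.exp _ * ψ p.2 * Complex.exp _‖ ≤ _
    rw [norm_mul, norm_mul, Complex.norm_exp_ofReal_mul_I,
      Complex.norm_exp_ofReal_mul_I, one_mul, mul_one]
  calc (∫ y, φ y * Complex.exp (((-2*π*s*y : ℝ):ℂ) * Complex.I) ∂ν)
      = ∫ y, (∫ u : ℝ, Complex.exp ((↑(2*π*(u*y)) * Complex.I)) * ψ u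
          * Complex.exp (((-2*π*s*y : ℝ):ℂ) * Complex.I)) ∂ν := by
        congr 1; funext y
        rw [hinv y, ← MeasureTheory.integral_mul_const]
    _ = ∫ u : ℝ, (∫ y, Complex.exp ((↑(2*π*(u*y)) * Complex.I)) * ψ u
          * Complex.exp (((-2*π*s*y : ℝ):ℂ) * Complex.I) ∂ν) := hswap
    _ = ∫ u, ψ u * ft1 ν (s - u) := by
        congr 1; funext u
        calc (∫ y, Complex.exp ((↑(2*π*(u*y)) * Complex.I)) * ψ u
              * Complex.exp (((-2*π*s*y : ℝ):ℂ) * Complex.I) ∂ν)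
            = ∫ y, ψ u * Complex.exp (((-2 * π * y * (s - u) : ℝ):ℂ) * Complex.I) ∂ν := by
              congr 1; funext y
              rw [mul_comm (Complex.exp _) (ψ u), mul_assoc, ← Complex.exp_add]
              congr 2
              push_cast; ring
          _ = ψ u * ft1 ν (s - u) := by rw [MeasureTheory.integral_const_mul, ft1]

lemma J_repr (K : Set ℝ) (hK0 : (0:ℝ) ∉ K) (hνK : ν Kᶜ = 0)
    (φ : SchwartzMap ℝ ℂ) (hφ : ∀ y ∈ K, φ y = 1 / (y:ℂ)) {d : ℝ} (hd : d ≠ 0) (A : ℝ) :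
    (∫ y, (∫ x in (0:ℝ)..1, Complex.exp (((-2 * π * d * (A + x) * y : ℝ):ℂ) * Complex.I)) ∂ν)
    = (1/(((-2*π*d : ℝ):ℂ) * Complex.I)) *
      ((∫ y, φ y * Complex.exp (((-2*π*(d*(A+1))*y : ℝ):ℂ) * Complex.I) ∂ν)
       - (∫ y, φ y * Complex.exp (((-2*π*(d*A)*y : ℝ):ℂ) * Complex.I) ∂ν)) := by
  have hK : ∀ᵐ y ∂ν, y ∈ K := by
    rw [MeasureTheory.ae_iff]
    convert hνK using 2
    rfl
  have step1 : (∫ y, (∫ x in (0:ℝ)..1,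
        Complex.exp (((-2 * π * d * (A + x) * y : ℝ):ℂ) * Complex.I)) ∂ν)
      = ∫ y, (1/(((-2*π*d : ℝ):ℂ) * Complex.I)) *
          (φ y * Complex.exp (((-2*π*(d*(A+1))*y : ℝ):ℂ) * Complex.I)
           - φ y * Complex.exp (((-2*π*(d*A)*y : ℝ):ℂ) * Complex.I)) ∂ν := by
    apply integral_congr_ae
    filter_upwards [hK] with y hy
    have hy0 : y ≠ 0 := fun h => hK0 (h ▸ hy)
    rw [inner_integral_eq hd hy0 A, hφ y hy]
    have hyC : (y:ℂ) ≠ 0 := Complex.ofReal_ne_zero.mpr hy0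
    have hwC : (((-2*π*d : ℝ)):ℂ) ≠ 0 := by
      apply Complex.ofReal_ne_zero.mpr
      simp only [mul_ne_zero_iff]
      exact ⟨⟨by norm_num, Real.pi_ne_zero⟩, hd⟩
    have hsplit : (((-2*π*d*y : ℝ)):ℂ) = (((-2*π*d : ℝ)):ℂ) * (y:ℂ) := by push_cast; ring
    rw [hsplit]
    field_simp
  rw [step1, MeasureTheory.integral_const_mul,
    integral_sub (integrable_phi_exp ν φ (d*(A+1))) (integrable_phi_exp ν φ (d*A))]

lemma integrable_japanese : Integrable (fun u : ℝ => (1+|u|) ^ (-(3/2 : ℝ))) := by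
  have h := integrable_one_add_norm (E := ℝ) (μ := volume) (r := 3/2)
    (by rw [Module.finrank_self]; norm_num)
  simpa [Real.norm_eq_abs] using h

lemma conv_bound (ψ : SchwartzMap ℝ ℂ) {C₂ : ℝ} (hC₂0 : 0 ≤ C₂)
    (hC₂ : ∀ u : ℝ, (1+|u|) ^ (2:ℝ) * ‖ψ u‖ ≤ C₂)
    {ξ s : ℝ} (hξ : ξ ≠ 0) (hs : |ξ| ≤ |s|) :
    ‖∫ u, ψ u * ft1 ν (s - u)‖ ≤
      (∫ u, ‖ψ u‖) * sSup {r : ℝ | ∃ t : ℝ, 1 ≤ |t| ∧ r = ‖ft1 ν (t * (|ξ|/2))‖}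
      + (ν Set.univ).toReal * C₂ * (∫ u : ℝ, (1+|u|) ^ (-(3/2 : ℝ)))
        * (1+|ξ|/2) ^ (-(1/2 : ℝ)) := by
  set M := (ν Set.univ).toReal with hM
  have hM0 : 0 ≤ M := ENNReal.toReal_nonneg
  set S := sSup {r : ℝ | ∃ t : ℝ, 1 ≤ |t| ∧ r = ‖ft1 ν (t * (|ξ|/2))‖} with hS
  have hS0 : 0 ≤ S := S_nonneg ν _
  set R := |s|/2 with hR
  have hξ0 : 0 < |ξ| := abs_pos.mpr hξ
  have hR0 : 0 < R := by rw [hR]; linarith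
  set H : ℝ → ℝ := fun u => ‖ψ u‖ * ‖ft1 ν (s-u)‖ with hHdef
  have hHcont : Continuous H := by
    apply Continuous.mul (ψ.continuous.norm)
    exact ((ft1_continuous ν).comp (by fun_prop)).norm
  have hH0 : ∀ u, 0 ≤ H u := fun u => mul_nonneg (norm_nonneg _) (norm_nonneg _)
  have hHint : Integrable H := by
    apply Integrable.mono' (ψ.integrable.norm.mul_const M) hHcont.aestronglyMeasurable
    filter_upwards with u
    rw [Real.norm_eq_abs, abs_of_nonneg (hH0 u)]
    exact mul_le_mul_of_nonneg_left (ft1_norm_le ν _) (norm_nonneg _)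
  have step0 : ‖∫ u, ψ u * ft1 ν (s - u)‖ ≤ ∫ u, H u := by
    calc ‖∫ u, ψ u * ft1 ν (s - u)‖ ≤ ∫ u, ‖ψ u * ft1 ν (s - u)‖ :=
          norm_integral_le_integral_norm _
      _ = ∫ u, H u := by congr 1; funext u; rw [norm_mul]
  set T := Set.Icc (-R) R with hT
  have hsplit : (∫ u, H u) = (∫ u in T, H u) + ∫ u in Tᶜ, H u :=
    (integral_add_compl measurableSet_Icc hHint).symm
  have boundT : (∫ u in T, H u) ≤ (∫ u, ‖ψ u‖) * S := by
    have h1 : (∫ u in T, H u) ≤ ∫ u in T, ‖ψ u‖ * S := by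
      apply setIntegral_mono_on hHint.integrableOn
        (ψ.integrable.norm.mul_const S).integrableOn measurableSet_Icc
      intro u hu
      apply mul_le_mul_of_nonneg_left _ (norm_nonneg _)
      apply ft1_le_S ν (by linarith) 
      have hu' : |u| ≤ R := abs_le.mpr ⟨hu.1, hu.2⟩
      have := abs_sub_abs_le_abs_sub s u
      rw [hR] at *
      linarith
    calc (∫ u in T, H u) ≤ ∫ u in T, ‖ψ u‖ * S := h1
      _ = (∫ u in T, ‖ψ u‖) * S := by rw [integral_mul_const]
      _ ≤ (∫ u, ‖ψ u‖) * S := by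
          apply mul_le_mul_of_nonneg_right _ hS0
          apply setIntegral_le_integral ψ.integrable.norm
          filter_upwards with u using norm_nonneg _
  have boundTc : (∫ u in Tᶜ, H u) ≤
      M * C₂ * (∫ u : ℝ, (1+|u|) ^ (-(3/2 : ℝ))) * (1+|ξ|/2) ^ (-(1/2 : ℝ)) := by
    set pw := (1+|ξ|/2) ^ (-(1/2 : ℝ)) with hpw
    have hbase2 : (0:ℝ) < 1 + |ξ|/2 := by positivity
    have hpw0 : 0 ≤ pw := Real.rpow_nonneg hbase2.le _
    have key : ∀ u ∈ Tᶜ, H u ≤ (M * C₂ * pw) * (1+|u|) ^ (-(3/2 : ℝ)) := by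
      intro u hu
      have hu' : R < |u| := by
        by_contra h
        push_neg at h
        exact hu (Set.mem_Icc.mpr (abs_le.mp h))
      have hbase : (0:ℝ) < 1 + |u| := by positivity
      have hψu : ‖ψ u‖ ≤ C₂ * (1+|u|) ^ (-(2 : ℝ)) := by
        have hp : (0:ℝ) < (1+|u|) ^ (2:ℝ) := Real.rpow_pos_of_pos hbase _
        have h6 : C₂ * (1+|u|) ^ (-(2:ℝ)) = C₂ / (1+|u|) ^ (2:ℝ) := by
          rw [Real.rpow_neg hbase.le, div_eq_mul_inv]
        rw [h6, le_div_iff₀ hp, mul_comm]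
        exact hC₂ u
      have hsplit2 : C₂ * (1+|u|) ^ (-(2 : ℝ))
          = C₂ * (1+|u|) ^ (-(3/2 : ℝ)) * (1+|u|) ^ (-(1/2 : ℝ)) := by
        rw [mul_assoc, ← Real.rpow_add hbase]; norm_num
      have hmono : (1+|u|) ^ (-(1/2 : ℝ)) ≤ pw := by
        rw [hpw]
        apply Real.rpow_le_rpow_of_nonpos hbase2 _ (by norm_num)
        have h7 : |ξ|/2 ≤ R := by rw [hR]; linarith
        linarith
      have hψu2 : ‖ψ u‖ ≤ C₂ * (1+|u|) ^ (-(3/2 : ℝ)) * pw := by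
        calc ‖ψ u‖ ≤ C₂ * (1+|u|) ^ (-(2 : ℝ)) := hψu
          _ = C₂ * (1+|u|) ^ (-(3/2 : ℝ)) * (1+|u|) ^ (-(1/2 : ℝ)) := hsplit2
          _ ≤ C₂ * (1+|u|) ^ (-(3/2 : ℝ)) * pw := by
              apply mul_le_mul_of_nonneg_left hmono
              positivity
      calc H u ≤ (C₂ * (1+|u|) ^ (-(3/2 : ℝ)) * pw) * M := by
            apply mul_le_mul hψu2 (ft1_norm_le ν _) (norm_nonneg _)
            positivity
        _ = (M * C₂ * pw) * (1+|u|) ^ (-(3/2 : ℝ)) := by ring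
    calc (∫ u in Tᶜ, H u) ≤ ∫ u in Tᶜ, (M * C₂ * pw) * (1+|u|) ^ (-(3/2 : ℝ)) := by
          apply setIntegral_mono_on hHint.integrableOn
            ((integrable_japanese.const_mul _).integrableOn) measurableSet_Icc.compl key
      _ = (M * C₂ * pw) * ∫ u in Tᶜ, (1+|u|) ^ (-(3/2 : ℝ)) := by rw [integral_const_mul]
      _ ≤ (M * C₂ * pw) * ∫ u : ℝ, (1+|u|) ^ (-(3/2 : ℝ)) := by
          apply mul_le_mul_of_nonneg_left _ (by positivity)
          apply setIntegral_le_integral integrable_japanese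
          filter_upwards with u using Real.rpow_nonneg (by positivity) _
      _ = M * C₂ * (∫ u : ℝ, (1+|u|) ^ (-(3/2 : ℝ))) * pw := by ring
  calc ‖∫ u, ψ u * ft1 ν (s - u)‖ ≤ ∫ u, H u := step0
    _ = (∫ u in T, H u) + ∫ u in Tᶜ, H u := hsplit
    _ ≤ _ := add_le_add boundT boundTc

end Stmt17Aux

open Real in
set_option maxHeartbeats 2000000 in
theorem stmt17 (ν : Measure ℝ) (hν0 : ν ≠ 0) [IsFiniteMeasure ν]
    (K : Set ℝ) (hKc : IsCompact K) (hK0 : (0 : ℝ) ∉ K) (hνK : ν Kᶜ = 0)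
    (φ : SchwartzMap ℝ ℂ) (hφ : ∀ y ∈ K, φ y = 1 / (y : ℂ)) :
    ∃ C₀ : ℝ, 0 < C₀ ∧ ∀ a b N ξ : ℝ, 1 ≤ a → 0 ≤ b → 1 ≤ N →
      (‖∫ y, (∫ x in (0 : ℝ)..1,
          Complex.exp (((-2 * Real.pi * (ξ / N) * (a * N + b * N + x) * y : ℝ) : ℂ) *
            Complex.I)) ∂ν‖ ≤ C₀ * gfun ν (|ξ| / 2)) ∧
      (ξ ≠ 0 →
        ‖∫ y, (∫ x in (0 : ℝ)..1,
            Complex.exp (((-2 * Real.pi * (ξ / N) * (a * N + b * N + x) * y : ℝ) : ℂ) *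
              Complex.I)) ∂ν‖ ≤ C₀ * gfun ν (|ξ| / 2) * (N / |ξ|)) := by
  classical
  set M := (ν Set.univ).toReal with hM
  have hM0 : 0 ≤ M := ENNReal.toReal_nonneg
  set ψ := SchwartzMap.fourierTransformCLM ℂ φ with hψ
  obtain ⟨C₂, hC₂0, hC₂⟩ := Stmt17Aux.exists_C₂ ψ
  set L := ∫ u, ‖ψ u‖ with hL
  have hL0 : 0 ≤ L := integral_nonneg (fun u => norm_nonneg _)
  set I₃ := ∫ u : ℝ, (1+|u|) ^ (-(3/2 : ℝ)) with hI₃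
  have hI₃0 : 0 ≤ I₃ := integral_nonneg (fun u => Real.rpow_nonneg (by positivity) _)
  have hMCI : 0 ≤ M * C₂ * I₃ := by positivity
  refine ⟨M + L + M*C₂*I₃ + 1, by positivity, fun a b N ξ ha hb hN => ?_⟩
  have hN0 : (0:ℝ) < N := by linarith
  have hx0 : (0:ℝ) ≤ |ξ|/2 := by positivity
  have hg0 : 0 ≤ gfun ν (|ξ|/2) := Stmt17Aux.gfun_nonneg ν hx0
  constructor
  · -- Part 1
    by_cases hξ : ξ = 0
    · subst hξ
      have h0 : |(0:ℝ)|/2 = 0 := by norm_num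
      rw [h0]
      calc ‖∫ y, (∫ x in (0 : ℝ)..1,
          Complex.exp (((-2 * Real.pi * ((0:ℝ) / N) * (a * N + b * N + x) * y : ℝ) : ℂ) *
            Complex.I)) ∂ν‖ ≤ M := Stmt17Aux.J_norm_le_M ν a b N 0
        _ = M * 1 := (mul_one M).symm
        _ ≤ (M + L + M*C₂*I₃ + 1) * gfun ν 0 := by
            apply mul_le_mul (by linarith) (Stmt17Aux.one_le_gfun_zero ν) zero_le_one
            linarith
    · have hξ0 : 0 < |ξ| := abs_pos.mpr hξ
      rw [Stmt17Aux.J_eq ν a b N ξ]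
      have hfin : volume (Set.Ioc (0:ℝ) 1) < ⊤ := by
        rw [Real.volume_Ioc]; exact ENNReal.ofReal_lt_top
      have hbd : ∀ x ∈ Set.Ioc (0:ℝ) 1, ‖ft1 ν ((ξ/N) * (a*N+b*N+x))‖ ≤
          sSup {r : ℝ | ∃ t : ℝ, 1 ≤ |t| ∧ r = ‖ft1 ν (t * (|ξ|/2))‖} := by
        intro x hx
        apply Stmt17Aux.ft1_le_S ν (by linarith)
        have := Stmt17Aux.arg_large (ξ := ξ) ha hb hN hx.1.le
        linarith
      have hmeas : AEStronglyMeasurable (fun x => ft1 ν ((ξ/N) * (a*N+b*N+x)))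
          (volume.restrict (Set.Ioc (0:ℝ) 1)) :=
        ((Stmt17Aux.ft1_continuous ν).comp (by fun_prop)).aestronglyMeasurable
      calc ‖∫ x in Set.Ioc (0:ℝ) 1, ft1 ν ((ξ/N) * (a*N+b*N+x))‖
          ≤ sSup {r : ℝ | ∃ t : ℝ, 1 ≤ |t| ∧ r = ‖ft1 ν (t * (|ξ|/2))‖} *
            (volume (Set.Ioc (0:ℝ) 1)).toReal :=
            norm_setIntegral_le_of_norm_le_const hfin hbd
        _ = sSup {r : ℝ | ∃ t : ℝ, 1 ≤ |t| ∧ r = ‖ft1 ν (t * (|ξ|/2))‖} := by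
            rw [Real.volume_Ioc]; norm_num
        _ ≤ 1 * gfun ν (|ξ|/2) := by rw [one_mul]; exact Stmt17Aux.S_le_gfun ν hx0
        _ ≤ (M + L + M*C₂*I₃ + 1) * gfun ν (|ξ|/2) := by
            apply mul_le_mul_of_nonneg_right _ hg0
            linarith
  · -- Part 2
    intro hξ
    have hξ0 : 0 < |ξ| := abs_pos.mpr hξ
    have hd : ξ / N ≠ 0 := div_ne_zero hξ hN0.ne'
    rw [Stmt17Aux.J_repr ν K hK0 hνK φ hφ hd (a*N+b*N),
      Stmt17Aux.F_eq ν φ ((ξ/N)*(a*N+b*N+1)), Stmt17Aux.F_eq ν φ ((ξ/N)*(a*N+b*N))]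
    set S := sSup {r : ℝ | ∃ t : ℝ, 1 ≤ |t| ∧ r = ‖ft1 ν (t * (|ξ|/2))‖} with hS
    have hS0 : 0 ≤ S := Stmt17Aux.S_nonneg ν _
    set pw := (1 + |ξ|/2) ^ (-(1/2 : ℝ)) with hpw
    have hpw0 : 0 ≤ pw := Stmt17Aux.pow_term_nonneg hx0
    have hgfun : gfun ν (|ξ|/2) = pw + S := rfl
    set B := L * S + M * C₂ * I₃ * pw with hB
    have hs1 : |ξ| ≤ |(ξ/N)*(a*N+b*N+1)| := Stmt17Aux.arg_large ha hb hN zero_le_one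
    have hs0 : |ξ| ≤ |(ξ/N)*(a*N+b*N)| := by
      have := Stmt17Aux.arg_large (ξ := ξ) (x := 0) ha hb hN le_rfl
      simpa using this
    have hX : ‖∫ u, ψ u * ft1 ν ((ξ/N)*(a*N+b*N+1) - u)‖ ≤ B :=
      Stmt17Aux.conv_bound ν ψ hC₂0 hC₂ hξ hs1
    have hY : ‖∫ u, ψ u * ft1 ν ((ξ/N)*(a*N+b*N) - u)‖ ≤ B :=
      Stmt17Aux.conv_bound ν ψ hC₂0 hC₂ hξ hs0
    have hκ : ‖(1 / ((((-2*π*(ξ/N) : ℝ)):ℂ) * Complex.I))‖ = 1/(2*π*(|ξ|/N)) := by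
      rw [norm_div, norm_one, norm_mul, Complex.norm_real, Complex.norm_I, mul_one,
        Real.norm_eq_abs]
      congr 1
      rw [show (-2*π*(ξ/N)) = (-(2*π))*(ξ/N) by ring, abs_mul, abs_neg,
        abs_of_pos (by positivity), abs_div, abs_of_pos hN0]
    have hBG : B ≤ (L + M*C₂*I₃) * gfun ν (|ξ|/2) := by
      rw [hgfun, hB]
      nlinarith [mul_nonneg hL0 hpw0, mul_nonneg hMCI hS0]
    have hpi : (1:ℝ) ≤ π := by nlinarith [Real.pi_gt_three]
    calc ‖(1 / ((((-2*π*(ξ/N) : ℝ)):ℂ) * Complex.I)) *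
          ((∫ u, ψ u * ft1 ν ((ξ/N)*(a*N+b*N+1) - u))
            - ∫ u, ψ u * ft1 ν ((ξ/N)*(a*N+b*N) - u))‖
        = ‖(1 / ((((-2*π*(ξ/N) : ℝ)):ℂ) * Complex.I))‖ *
          ‖(∫ u, ψ u * ft1 ν ((ξ/N)*(a*N+b*N+1) - u))
            - ∫ u, ψ u * ft1 ν ((ξ/N)*(a*N+b*N) - u)‖ := norm_mul _ _
      _ ≤ (1/(2*π*(|ξ|/N))) * (B + B) := by
          rw [hκ]
          apply mul_le_mul_of_nonneg_left _ (by positivity)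
          exact le_trans (norm_sub_le _ _) (add_le_add hX hY)
      _ = B * (1/π) * (N/|ξ|) := by field_simp; ring
      _ ≤ B * 1 * (N/|ξ|) := by
          have hB0 : 0 ≤ B := by
            rw [hB]
            exact add_nonneg (mul_nonneg hL0 hS0) (mul_nonneg hMCI hpw0)
          apply mul_le_mul_of_nonneg_right _ (by positivity)
          apply mul_le_mul_of_nonneg_left _ hB0
          rw [div_le_one (by positivity)]
          exact hpi
      _ = B * (N/|ξ|) := by rw [mul_one]
      _ ≤ ((L + M*C₂*I₃) * gfun ν (|ξ|/2)) * (N/|ξ|) := by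
          apply mul_le_mul_of_nonneg_right hBG (by positivity)
      _ ≤ ((M + L + M*C₂*I₃ + 1) * gfun ν (|ξ|/2)) * (N/|ξ|) := by
          apply mul_le_mul_of_nonneg_right _ (by positivity)
          apply mul_le_mul_of_nonneg_right _ hg0
          linarith
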